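/- Every permutation u ∈ S_n admits a unique tuple (j_1, j_2, …, j_{n−1}) with 0 ≤ j_m ≤ m for each m, such that u = u_{j_{n−1}}^{(n−1)} ⋯ u_{j_2}^{(2)} u_{j_1}^{(1)} and ℓ(u) = j_1 + j_2 + ⋯ + j_{n−1}, where u_j^{(m)} = s_{m−j+1} ⋯ s_{m−1} s_m and u_0^{(m)} = id. -/

import Mathlib

/-- The adjacent transposition `s_i = (i, i+1)` of `S_n` (for `1 ≤ i ≤ n-1`),
realized as a permutation of `Fin n` using 0-indexed positions: it swaps
positions `i-1` and `i`. -/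
def s (n : ℕ) [NeZero n] (i : ℕ) : Equiv.Perm (Fin n) :=
  Equiv.swap (Fin.ofNat n (i - 1 : ℕ)) (Fin.ofNat n (i : ℕ))

/-- The product `s_1 s_2 ⋯ s_{n-1}`, taken left to right. -/
def c (n : ℕ) [NeZero n] : Equiv.Perm (Fin n) :=
  ((List.range (n - 1)).map (fun i => s n (i + 1))).prod

/-- The inversion number (Coxeter length) of a permutation of `Fin n`. -/
def len {n : ℕ} (u : Equiv.Perm (Fin n)) : ℕ :=
  (Finset.univ.filter (fun p : Fin n × Fin n => p.1 < p.2 ∧ u p.2 < u p.1)).card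

/-- The word `u_j^{(m)} = s_{m-j+1} s_{m-j+2} ⋯ s_m` (product of `j` consecutive
adjacent transpositions, left to right; `u_0^{(m)} = 1`). -/
def uu (n : ℕ) [NeZero n] (m j : ℕ) : Equiv.Perm (Fin n) :=
  ((List.range j).map (fun t => s n (m - j + 1 + t))).prod
lemma app_s (n : ℕ) [NeZero n] (i : ℕ) (h1 : 1 ≤ i) (h2 : i < n) (x : Fin n) :
    ((s n i x : Fin n) : ℕ) = if (x : ℕ) = i - 1 then i else if (x : ℕ) = i then i - 1 else x := by
  have ha : (Fin.ofNat n (i - 1 : ℕ)).val = i - 1 := by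
    show (i - 1) % n = i - 1; exact Nat.mod_eq_of_lt (by omega)
  have hb : (Fin.ofNat n (i : ℕ)).val = i := by
    show i % n = i; exact Nat.mod_eq_of_lt h2
  rw [s, Equiv.swap_apply_def]
  split_ifs with e1 e2 e3 e4 e5 <;>
    (simp only [Fin.ext_iff, ha, hb] at * <;> omega)

lemma uu_zero (n : ℕ) [NeZero n] (m : ℕ) : uu n m 0 = 1 := by simp [uu]

lemma uu_succ (n : ℕ) [NeZero n] (m d : ℕ) (hd : d < m) :
    uu n m (d + 1) = s n (m - d) * uu n m d := by
  rw [uu, uu, List.range_succ_eq_map]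
  simp only [List.map_cons, List.map_map, List.prod_cons]
  congr 1
  · rw [show m - (d + 1) + 1 + 0 = m - d by omega]
  · refine congrArg List.prod (List.map_congr_left fun t _ => ?_)
    show s n (m - (d + 1) + 1 + (t + 1)) = s n (m - d + 1 + t)
    congr 1; omega

lemma app_uu (n : ℕ) [NeZero n] (m d : ℕ) (hd : d ≤ m) (hm : m < n) (x : Fin n) :
    ((uu n m d x : Fin n) : ℕ) =
      if (x : ℕ) = m then m - d
      else if m - d ≤ (x : ℕ) ∧ (x : ℕ) < m then (x : ℕ) + 1 else (x : ℕ) := by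
  induction d with
  | zero => rw [uu_zero]; simp; split_ifs with h1 h2 <;> omega
  | succ d ih =>
      have hd' : d ≤ m := by omega
      rw [uu_succ n m d (by omega), Equiv.Perm.mul_apply]
      have hs := app_s n (m - d) (by omega) (by omega) (uu n m d x)
      rw [hs, ih hd']
      split_ifs <;> omega

lemma uu_fix (n : ℕ) [NeZero n] (m d : ℕ) (hd : d ≤ m) (x : Fin n) (hx : m < (x : ℕ)) :
    uu n m d x = x := by
  have h := app_uu n m d hd (by omega) x
  apply Fin.ext
  rw [h]; split_ifs <;> omega

/-- extend a tuple to a function on ℕ -/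
def jext {n : ℕ} (j : Fin (n - 1) → ℕ) : ℕ → ℕ :=
  fun i => if h : i < n - 1 then j ⟨i, h⟩ else 0

/-- partial products of the canonical word -/
def Fp (n : ℕ) [NeZero n] (j : Fin (n - 1) → ℕ) (m : ℕ) : Equiv.Perm (Fin n) :=
  (((List.range m).map (fun i => uu n (i + 1) (jext j i))).reverse).prod

lemma Fp_succ (n : ℕ) [NeZero n] (j : Fin (n - 1) → ℕ) (m : ℕ) :
    Fp n j (m + 1) = uu n (m + 1) (jext j m) * Fp n j m := by
  rw [Fp, Fp, List.range_succ]
  simp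

lemma Fp_stable (n : ℕ) [NeZero n] (j : Fin (n - 1) → ℕ) (m m' : ℕ) (hm : m ≤ m')
    (h0 : ∀ i, m ≤ i → jext j i = 0) : Fp n j m' = Fp n j m := by
  induction m' with
  | zero => have : m = 0 := by omega
            rw [this]
  | succ k ih =>
      rcases Nat.lt_or_ge m (k + 1) with h | h
      · rw [Fp_succ, h0 k (by omega), uu_zero, one_mul, ih (by omega)]
      · have : m = k + 1 := by omega
        rw [this]

lemma F_eq_Fp (n : ℕ) [NeZero n] (j : Fin (n - 1) → ℕ) :
    ((List.ofFn (fun i : Fin (n - 1) => uu n ((i : ℕ) + 1) (j i))).reverse).prod = Fp n j (n - 1) := by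
  rw [Fp]
  congr 1
  congr 1
  apply List.ext_getElem
  · simp
  · intro k h1 h2
    simp only [List.getElem_ofFn, List.getElem_map, List.getElem_range]
    have hk : k < n - 1 := by simpa using h1
    congr 1
    simp [jext, hk]

lemma Fp_fix (n : ℕ) [NeZero n] (j : Fin (n - 1) → ℕ) (m : ℕ)
    (hb : ∀ i, jext j i ≤ i + 1) (x : Fin n) (hx : m < (x : ℕ)) :
    Fp n j m x = x := by
  induction m with
  | zero => rw [Fp]; simp
  | succ k ih =>
      rw [Fp_succ, Equiv.Perm.mul_apply, ih (by omega), uu_fix n (k+1) _ (hb k) x hx]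

lemma len_mul (n : ℕ) [NeZero n] (m d : ℕ) (hd : d ≤ m) (hm : m < n)
    (v : Equiv.Perm (Fin n)) (hv : ∀ x : Fin n, m ≤ (x : ℕ) → v x = x) :
    len (uu n m d * v) = d + len v := by
  set w := uu n m d with hwdef
  set u := w * v with hudef
  set M : Fin n := ⟨m, hm⟩ with hMdef
  have hw : ∀ x : Fin n, ((w x : Fin n) : ℕ) =
      if (x : ℕ) = m then m - d
      else if m - d ≤ (x : ℕ) ∧ (x : ℕ) < m then (x : ℕ) + 1 else (x : ℕ) :=
    fun x => app_uu n m d hd hm x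
  have hvlt : ∀ x : Fin n, (x : ℕ) < m → ((v x : Fin n) : ℕ) < m := by
    intro x hx
    by_contra h
    push_neg at h
    have h2 : v (v x) = v x := hv (v x) h
    have h3 : v x = x := v.injective h2
    rw [h3] at h; omega
  have hu : ∀ x : Fin n, u x = w (v x) := fun x => rfl
  have huM : ((u M : Fin n) : ℕ) = m - d := by
    rw [hu, hv M (le_refl m), hw M]
    simp [hMdef]
  have hsplit := Finset.card_filter_add_card_filter_not
    (s := Finset.univ.filter (fun p : Fin n × Fin n => p.1 < p.2 ∧ u p.2 < u p.1))
    (p := fun p : Fin n × Fin n => p.2 = M)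
  have hpart2 : ((Finset.univ.filter (fun p : Fin n × Fin n => p.1 < p.2 ∧ u p.2 < u p.1)).filter
      (fun p => ¬ p.2 = M)) = Finset.univ.filter (fun p : Fin n × Fin n => p.1 < p.2 ∧ v p.2 < v p.1) := by
    ext p
    obtain ⟨a, b⟩ := p
    simp only [Finset.mem_filter, Finset.mem_univ, true_and, Fin.lt_def]
    constructor
    · rintro ⟨⟨hab, hinv⟩, hbM⟩
      refine ⟨hab, ?_⟩
      have hbm : (b : ℕ) ≠ m := by
        intro h; exact hbM (Fin.ext h)
      rcases Nat.lt_or_ge (b : ℕ) m with hblt | hbgt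
      · have hva : ((v a : Fin n) : ℕ) < m := hvlt a (by omega)
        have hvb : ((v b : Fin n) : ℕ) < m := hvlt b hblt
        rw [hu, hu, hw, hw] at hinv
        split_ifs at hinv <;> omega
      · exfalso
        have hub : ((u b : Fin n) : ℕ) = (b : ℕ) := by
          rw [hu, hv b (by omega), hw]
          split_ifs <;> omega
        rw [hub] at hinv
        rcases Nat.lt_or_ge (a : ℕ) m with halt | hage
        · have hva : ((v a : Fin n) : ℕ) < m := hvlt a halt
          have : ((u a : Fin n) : ℕ) ≤ m := by
            rw [hu, hw]; split_ifs <;> omega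
          omega
        · have : ((u a : Fin n) : ℕ) ≤ (a : ℕ) := by
            rw [hu, hv a hage, hw]; split_ifs <;> omega
          omega
    · rintro ⟨hab, hinv⟩
      have hbm : (b : ℕ) < m := by
        by_contra h
        push_neg at h
        rw [hv b h] at hinv
        rcases Nat.lt_or_ge (a : ℕ) m with halt | hage
        · have := hvlt a halt; omega
        · rw [hv a hage] at hinv; omega
      have ham : (a : ℕ) < m := by omega
      have hva : ((v a : Fin n) : ℕ) < m := hvlt a ham
      have hvb : ((v b : Fin n) : ℕ) < m := hvlt b hbm
      refine ⟨⟨hab, ?_⟩, ?_⟩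
      · rw [hu, hu, hw, hw]
        split_ifs <;> omega
      · intro h
        rw [h] at hbm
        simp [hMdef] at hbm
  have hpart1 : ((Finset.univ.filter (fun p : Fin n × Fin n => p.1 < p.2 ∧ u p.2 < u p.1)).filter
      (fun p => p.2 = M)).card = d := by
    have step1 : ((Finset.univ.filter (fun p : Fin n × Fin n => p.1 < p.2 ∧ u p.2 < u p.1)).filter
        (fun p => p.2 = M)).card =
        (Finset.univ.filter (fun a : Fin n => (a : ℕ) < m ∧ m - d < ((u a : Fin n) : ℕ))).card := by
      refine Finset.card_bij' (fun p _ => p.1) (fun a _ => (a, M)) ?hi ?hj ?li ?ri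
      case hi =>
        intro p hp
        simp only [Finset.mem_filter, Finset.mem_univ, true_and] at hp ⊢
        obtain ⟨⟨hab, hinv⟩, hbM⟩ := hp
        rw [hbM] at hab hinv
        rw [Fin.lt_def] at hab hinv
        rw [huM] at hinv
        exact ⟨hab, hinv⟩
      case hj =>
        intro a ha
        simp only [Finset.mem_filter, Finset.mem_univ, true_and] at ha ⊢
        exact ⟨⟨by rw [Fin.lt_def]; exact ha.1, by rw [Fin.lt_def, huM]; exact ha.2⟩, trivial⟩
      case li =>
        intro p hp
        simp only [Finset.mem_filter] at hp
        exact Prod.ext rfl hp.2.symm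
      case ri => intro a _; rfl
    have step2 : (Finset.univ.filter (fun a : Fin n => (a : ℕ) < m ∧ m - d < ((u a : Fin n) : ℕ))).card =
        (Finset.univ.filter (fun b : Fin n => m - d ≤ (b : ℕ) ∧ (b : ℕ) < m)).card := by
      refine Finset.card_bij (fun a _ => v a) ?hi ?inj ?surj
      case hi =>
        intro a ha
        simp only [Finset.mem_filter, Finset.mem_univ, true_and] at ha ⊢
        obtain ⟨ham, hu2⟩ := ha
        have hva : ((v a : Fin n) : ℕ) < m := hvlt a ham
        rw [hu, hw] at hu2
        refine ⟨?_, hva⟩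
        split_ifs at hu2 <;> omega
      case inj =>
        intro a _ a' _ h
        exact v.injective h
      case surj =>
        intro b hb
        simp only [Finset.mem_filter, Finset.mem_univ, true_and] at hb
        refine ⟨v⁻¹ b, ?_, ?_⟩
        · simp only [Finset.mem_filter, Finset.mem_univ, true_and]
          have hvb : ((v (v⁻¹ b) : Fin n) : ℕ) = (b : ℕ) := by
            rw [show v (v⁻¹ b) = b from Equiv.apply_symm_apply v b]
          have hinvb : ((v⁻¹ b : Fin n) : ℕ) < m := by
            by_contra h
            push_neg at h
            have h1 := hv (v⁻¹ b) h
            rw [show v (v⁻¹ b) = b from Equiv.apply_symm_apply v b] at h1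
            rw [← h1] at h
            omega
          refine ⟨hinvb, ?_⟩
          rw [hu, hw, hvb]
          split_ifs <;> omega
        · exact Equiv.apply_symm_apply v b
    have step3 : (Finset.univ.filter (fun b : Fin n => m - d ≤ (b : ℕ) ∧ (b : ℕ) < m)).card = d := by
      have heq : (Finset.univ.filter (fun b : Fin n => m - d ≤ (b : ℕ) ∧ (b : ℕ) < m)).card =
          (Finset.Ico (m - d) m).card := by
        refine Finset.card_bij' (fun b _ => (b : ℕ))
          (fun x hx => Fin.mk x (lt_trans (Finset.mem_Ico.mp hx).2 hm)) ?hi ?hj ?li ?ri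
        case hi =>
          intro b hb
          simp only [Finset.mem_filter, Finset.mem_univ, true_and] at hb
          rw [Finset.mem_Ico]; exact hb
        case hj =>
          intro x hx
          have := Finset.mem_Ico.mp hx
          simp only [Finset.mem_filter, Finset.mem_univ, true_and]
          exact this
        case li => intro b _; rfl
        case ri => intro x _; rfl
      rw [heq, Nat.card_Ico]; omega
    rw [step1, step2, step3]
  rw [len, len, ← hsplit, hpart1, hpart2]

lemma jext_lt {n : ℕ} (j : Fin (n - 1) → ℕ) (i : ℕ) (h : i < n - 1) :
    jext j i = j ⟨i, h⟩ := dif_pos h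

lemma jext_bound {n : ℕ} (j : Fin (n - 1) → ℕ) (hb : ∀ i : Fin (n - 1), j i ≤ (i : ℕ) + 1)
    (i : ℕ) : jext j i ≤ i + 1 := by
  rw [jext]
  split
  · exact hb _
  · omega

lemma Fp_congr (n : ℕ) [NeZero n] (j j' : Fin (n - 1) → ℕ) (t : ℕ)
    (h : ∀ i, i < t → jext j i = jext j' i) : Fp n j t = Fp n j' t := by
  rw [Fp, Fp]
  congr 1
  congr 1
  apply List.map_congr_left
  intro i hi
  rw [h i (List.mem_range.mp hi)]

lemma len_one (n : ℕ) [NeZero n] (u : Equiv.Perm (Fin n)) (h : ∀ x, u x = x) : len u = 0 := by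
  rw [len, Finset.card_eq_zero, Finset.filter_eq_empty_iff]
  intro p _
  rw [h, h]
  exact fun hc => absurd hc.2 (not_lt.mpr (le_of_lt hc.1))

lemma sum_update_split {n : ℕ} (j' : Fin (n - 1) → ℕ) (i0 : Fin (n - 1)) (d : ℕ)
    (h0 : j' i0 = 0) : ∑ i, Function.update j' i0 d i = d + ∑ i, j' i := by
  have hup : Function.update j' i0 0 = j' := by
    rw [← h0, Function.update_eq_self]
  have e1 : ∑ i, Function.update j' i0 d i = d + ∑ x ∈ Finset.univ \ {i0}, j' x :=
    Finset.sum_update_of_mem (Finset.mem_univ i0) j' d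
  have e2 : ∑ i, j' i = 0 + ∑ x ∈ Finset.univ \ {i0}, j' x := by
    conv_lhs => rw [← hup]
    exact Finset.sum_update_of_mem (Finset.mem_univ i0) j' 0
  omega

/-- trivial case of the main induction -/
lemma main_triv (n : ℕ) [NeZero n] (m : ℕ) (hm : m ≤ 1) (u : Equiv.Perm (Fin n))
    (hu : ∀ x : Fin n, u x = x) :
    ∃! j : Fin (n - 1) → ℕ, (∀ i : Fin (n - 1), j i ≤ (i : ℕ) + 1) ∧
      (∀ i : Fin (n - 1), m ≤ (i : ℕ) + 1 → j i = 0) ∧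
      u = Fp n j (n - 1) ∧ len u = ∑ i, j i := by
  refine ⟨fun _ => 0, ⟨fun i => Nat.zero_le _, fun i _ => rfl, ?_, ?_⟩, ?_⟩
  · have h0 : ∀ i, jext (fun _ : Fin (n - 1) => (0 : ℕ)) i = 0 := by
      intro i; rw [jext]; split <;> rfl
    rw [Fp_stable n _ 0 (n - 1) (Nat.zero_le _) (fun i _ => h0 i)]
    rw [Fp]
    simp only [List.range_zero, List.map_nil, List.reverse_nil, List.prod_nil]
    exact Equiv.ext hu
  · rw [len_one n u hu]
    simp
  · intro j2 ⟨_, hz2, _, _⟩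
    funext i
    exact hz2 i (by omega)

lemma main (n : ℕ) [NeZero n] (m : ℕ) (hm : m ≤ n) (u : Equiv.Perm (Fin n))
    (hu : ∀ x : Fin n, m ≤ (x : ℕ) → u x = x) :
    ∃! j : Fin (n - 1) → ℕ, (∀ i : Fin (n - 1), j i ≤ (i : ℕ) + 1) ∧
      (∀ i : Fin (n - 1), m ≤ (i : ℕ) + 1 → j i = 0) ∧
      u = Fp n j (n - 1) ∧ len u = ∑ i, j i := by
  induction m generalizing u with
  | zero => exact main_triv n 0 (by omega) u (fun x => hu x (Nat.zero_le _))
  | succ m ih =>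
    have hMf : m < n := by omega
    set Mf : Fin n := ⟨m, hMf⟩ with hMfdef
    have hMfval : (Mf : ℕ) = m := rfl
    have hum : ((u Mf : Fin n) : ℕ) ≤ m := by
      by_contra h
      push_neg at h
      have h2 : u (u Mf) = u Mf := hu (u Mf) h
      have h3 : u Mf = Mf := u.injective h2
      rw [h3, hMfval] at h
      omega
    rcases Nat.eq_zero_or_pos m with h0 | hpos
    · -- m = 0 : u is the identity
      subst h0
      refine main_triv n 1 le_rfl u ?_
      intro x
      rcases Nat.eq_zero_or_pos (x : ℕ) with hx | hx
      · have hxM : x = Mf := Fin.ext (by rw [hMfval]; omega)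
        rw [hxM]
        exact Fin.ext (by rw [hMfval]; omega)
      · exact hu x hx
    · -- m ≥ 1
      obtain ⟨t, rfl⟩ : ∃ t, m = t + 1 := ⟨m - 1, by omega⟩
      have hi0 : t < n - 1 := by omega
      set i0 : Fin (n - 1) := ⟨t, hi0⟩ with hi0def
      have hi0val : (i0 : ℕ) = t := rfl
      set k := ((u Mf : Fin n) : ℕ) with hkdef
      set d := t + 1 - k with hddef
      have hd : d ≤ t + 1 := by omega
      have hwM : (uu n (t + 1) d) Mf = u Mf := by
        apply Fin.ext
        rw [app_uu n (t + 1) d hd (by omega) Mf, hMfval, ← hkdef]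
        split_ifs <;> omega
      set v := (uu n (t + 1) d)⁻¹ * u with hvdef
      have hveq : u = uu n (t + 1) d * v := by
        rw [hvdef, ← mul_assoc]
        simp
      have hv : ∀ x : Fin n, t + 1 ≤ (x : ℕ) → v x = x := by
        intro x hx
        rcases Nat.lt_or_ge (t + 1) (x : ℕ) with hgt | hle
        · have hux : u x = x := hu x (by omega)
          have hwx : (uu n (t + 1) d) x = x := uu_fix n (t + 1) d hd x hgt
          rw [hvdef, Equiv.Perm.mul_apply, hux]
          nth_rewrite 1 [← hwx]
          exact Equiv.symm_apply_apply _ _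
        · have hxM : x = Mf := Fin.ext (by rw [hMfval]; omega)
          rw [hxM, hvdef, Equiv.Perm.mul_apply, ← hwM]
          exact Equiv.symm_apply_apply _ _
      obtain ⟨j', ⟨hb', hz', he', hl'⟩, huniq'⟩ := ih (by omega) v hv
      have hz'' : ∀ i : ℕ, t ≤ i → jext j' i = 0 := by
        intro i hti
        rw [jext]
        split
        · next h => exact hz' ⟨i, h⟩ (show t + 1 ≤ i + 1 by omega)
        · rfl
      set j : Fin (n - 1) → ℕ := Function.update j' i0 d with hjdef
      have hji0 : j i0 = d := Function.update_self i0 d j'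
      have hjne : ∀ i : Fin (n - 1), i ≠ i0 → j i = j' i := fun i h => Function.update_of_ne h d j'
      have hjt : jext j t = d := by
        rw [jext_lt j t hi0]
        exact hji0
      have hne_of_ge : ∀ (i : ℕ) (h : i < n - 1), t + 1 ≤ i → (⟨i, h⟩ : Fin (n - 1)) ≠ i0 := by
        intro i h hti hc
        have : i = t := congrArg Fin.val hc
        omega
      have hjz : ∀ i : ℕ, t + 1 ≤ i → jext j i = 0 := by
        intro i hti
        rw [jext]
        split
        · next h =>
          rw [hjdef, Function.update_of_ne (hne_of_ge i h hti) d j']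
          exact hz' ⟨i, h⟩ (show t + 1 ≤ i + 1 by omega)
        · rfl
      have hne_of_lt : ∀ (i : ℕ) (h : i < n - 1), i < t → (⟨i, h⟩ : Fin (n - 1)) ≠ i0 := by
        intro i h hti hc
        have : i = t := congrArg Fin.val hc
        omega
      have hjlow : ∀ i : ℕ, i < t → jext j i = jext j' i := by
        intro i hti
        rw [jext, jext]
        split
        · next h => rw [hjdef, Function.update_of_ne (hne_of_lt i h hti) d j']
        · rfl
      have hufact : u = Fp n j (n - 1) := by
        have e1 : Fp n j (n - 1) = Fp n j (t + 1) :=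
          Fp_stable n j (t + 1) (n - 1) (by omega) hjz
        have e2 : Fp n j' (n - 1) = Fp n j' t :=
          Fp_stable n j' t (n - 1) (by omega) hz''
        have e3 : Fp n j t = Fp n j' t := Fp_congr n j j' t hjlow
        rw [e1, Fp_succ, hjt, e3, ← e2, ← he']
        exact hveq
      have hlen : len u = d + len v := by
        rw [hveq]
        exact len_mul n (t + 1) d hd (by omega) v hv
      have hj'i0 : j' i0 = 0 := hz' i0 (show t + 1 ≤ t + 1 by omega)
      have hsum : ∑ i, j i = d + ∑ i, j' i := sum_update_split j' i0 d hj'i0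
      refine ⟨j, ⟨?_, ?_, hufact, by rw [hlen, hl', hsum]⟩, ?_⟩
      · intro i
        by_cases h : i = i0
        · rw [h, hji0]
          exact (show d ≤ t + 1 from hd)
        · rw [hjne i h]; exact hb' i
      · intro i hti
        have hne : i ≠ i0 := by
          intro hc
          rw [hc, hi0val] at hti
          omega
        rw [hjne i hne]
        exact hz' i (by omega)
      · -- uniqueness
        intro j2 ⟨hb2, hz2, he2, hl2⟩
        set d2 := j2 i0 with hd2def
        have hd2 : d2 ≤ t + 1 := hb2 i0
        set j2' : Fin (n - 1) → ℕ := Function.update j2 i0 0 with hj2'def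
        have hj2'i0 : j2' i0 = 0 := Function.update_self i0 0 j2
        have hj2'ne : ∀ i : Fin (n - 1), i ≠ i0 → j2' i = j2 i :=
          fun i h => Function.update_of_ne h 0 j2
        have hj2'z : ∀ i : ℕ, t ≤ i → jext j2' i = 0 := by
          intro i hti
          rw [jext]
          split
          · next h =>
            by_cases hc : (⟨i, h⟩ : Fin (n - 1)) = i0
            · rw [hj2'def, hc, Function.update_self]
            · rw [hj2'def, Function.update_of_ne hc 0 j2]
              have hne : i ≠ t := fun he => hc (Fin.ext he)
              exact hz2 ⟨i, h⟩ (show t + 1 + 1 ≤ i + 1 by omega)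
          · rfl
        have hj2t : jext j2 t = d2 := by
          rw [jext_lt j2 t hi0]
        have hj2low : ∀ i : ℕ, i < t → jext j2 i = jext j2' i := by
          intro i hti
          rw [jext, jext]
          split
          · next h => rw [hj2'def, Function.update_of_ne (hne_of_lt i h hti) 0 j2]
          · rfl
        have hz2' : ∀ i : ℕ, t + 1 ≤ i → jext j2 i = 0 := by
          intro i hti
          rw [jext]
          split
          · next h => exact hz2 ⟨i, h⟩ (show t + 1 + 1 ≤ i + 1 by omega)
          · rfl
        set v2 := Fp n j2' t with hv2def
        have hufact2 : u = uu n (t + 1) d2 * v2 := by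
          have e1 : Fp n j2 (n - 1) = Fp n j2 (t + 1) :=
            Fp_stable n j2 (t + 1) (n - 1) (by omega) hz2'
          have e2 : Fp n j2 t = Fp n j2' t := Fp_congr n j2 j2' t hj2low
          rw [he2, e1, Fp_succ, hj2t, e2]
        have hb2' : ∀ i : Fin (n - 1), j2' i ≤ (i : ℕ) + 1 := by
          intro i
          by_cases h : i = i0
          · rw [h, hj2'i0]; exact Nat.zero_le _
          · rw [hj2'ne i h]; exact hb2 i
        have hv2fix : ∀ x : Fin n, t + 1 ≤ (x : ℕ) → v2 x = x := by
          intro x hx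
          exact Fp_fix n j2' t (jext_bound j2' hb2') x (by omega)
        have hd2d : d2 = d := by
          have h1 : ((u Mf : Fin n) : ℕ) = t + 1 - d2 := by
            rw [hufact2, Equiv.Perm.mul_apply, hv2fix Mf (by rw [hMfval]),
              app_uu n (t + 1) d2 hd2 (by omega) Mf, hMfval]
            split_ifs <;> omega
          rw [← hkdef] at h1
          omega
        have hveq2 : v2 = v := by
          have heq : uu n (t + 1) d * v2 = uu n (t + 1) d * v := by
            rw [← hd2d, ← hufact2, hveq, hd2d]
          exact mul_left_cancel heq
        have hsum2 : ∑ i, j2 i = d2 + ∑ i, j2' i := by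
          have hrec : j2 = Function.update j2' i0 d2 := by
            funext i
            by_cases h : i = i0
            · rw [h, Function.update_self]
            · rw [Function.update_of_ne h, hj2'ne i h]
          conv_lhs => rw [hrec]
          exact sum_update_split j2' i0 d2 hj2'i0
        have hlen2 : len u = d + len v2 := by
          rw [hufact2, hd2d]
          exact len_mul n (t + 1) d hd (by omega) v2 hv2fix
        have hIH2 : j2' = j' := by
          apply huniq'
          refine ⟨hb2', ?_, ?_, ?_⟩
          · intro i hti
            have := hj2'z (i : ℕ) (by omega)
            rwa [jext_lt j2' (i : ℕ) i.isLt] at this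
          · rw [← hveq2, hv2def, Fp_stable n j2' t (n - 1) (by omega) hj2'z]
          · have hlv2 : len v2 = ∑ i, j2' i := by
              have hx := hl2
              rw [hlen2, hsum2, hd2d] at hx
              omega
            rw [← hveq2]
            exact hlv2
        funext i
        by_cases h : i = i0
        · rw [h, hji0, ← hd2d]
        · rw [hjne i h, ← hIH2, hj2'ne i h]

/-- Canonical factorization: every `u ∈ S_n` has a unique tuple
`(j_1, …, j_{n-1})` with `0 ≤ j_m ≤ m`,
`u = u_{j_{n-1}}^{(n-1)} ⋯ u_{j_2}^{(2)} u_{j_1}^{(1)}` and `ℓ(u) = Σ j_m`. -/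
theorem stmt7 (n : ℕ) [NeZero n] (u : Equiv.Perm (Fin n)) :
    ∃! j : Fin (n - 1) → ℕ, (∀ i, j i ≤ (i : ℕ) + 1) ∧
      u = ((List.ofFn (fun i : Fin (n - 1) => uu n ((i : ℕ) + 1) (j i))).reverse).prod ∧
      len u = ∑ i, j i := by
  obtain ⟨j, ⟨hb, _, he, hl⟩, huniq⟩ :=
    main n n le_rfl u (fun x hx => absurd x.isLt (by omega))
  refine ⟨j, ⟨hb, ?_, hl⟩, ?_⟩
  · rw [F_eq_Fp]; exact he
  · intro j2 ⟨hb2, he2, hl2⟩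
    apply huniq
    refine ⟨hb2, ?_, ?_, hl2⟩
    · intro i hi
      exact absurd hi (by have := i.isLt; omega)
    · rw [← F_eq_Fp]; exact he2
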